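/- If (αβ/(1+β))^(1/β) > 1, then f(x | α, β) is strictly increasing on (0,1), so the density attains its supremum at the right endpoint x = 1. -/

import Mathlib

open Real

theorem unitGompertz_mode_boundary (α β : ℝ) (hα : 0 < α) (hβ : 0 < β)
    (h : 1 < (α * β / (1 + β)) ^ (1 / β)) :
    let f : ℝ → ℝ := fun y => α * β * Real.exp (-α * (1 / y ^ β - 1)) / y ^ (1 + β)
    StrictMonoOn f (Set.Ioo (0:ℝ) 1) ∧ IsLUB (f '' Set.Ioo (0:ℝ) 1) (f 1) := by
  intro f
  have hβ1 : (0:ℝ) < 1 + β := by linarith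
  have hab : 0 < α * β := mul_pos hα hβ
  have hratio : 1 + β < α * β := by
    have hx : 0 < α * β / (1 + β) := div_pos hab hβ1
    rcases (Real.one_lt_rpow_iff_of_pos hx).mp h with ⟨h1, _⟩ | ⟨_, h2⟩
    · exact (one_lt_div hβ1).mp h1
    · exact absurd h2 (not_lt.mpr (by positivity))
  set g : ℝ → ℝ := fun y => Real.log (α*β) + (-α) * ((y ^ β)⁻¹ - 1) - (1+β) * Real.log y
    with hgdef
  have hkey : ∀ y : ℝ, 0 < y → HasDerivAt g ((α * β / y ^ β - (1 + β)) / y) y := by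
    intro y hy0
    have hne : (y:ℝ) ^ β ≠ 0 := (Real.rpow_pos_of_pos hy0 β).ne'
    have h1 : HasDerivAt (fun t : ℝ => t ^ β) (β * y ^ (β - 1)) y :=
      Real.hasDerivAt_rpow_const (Or.inl hy0.ne')
    have h2 := ((h1.inv hne).sub_const 1).const_mul (-α)
    have h3 := (Real.hasDerivAt_log hy0.ne').const_mul (1 + β)
    have h4 := ((hasDerivAt_const y (Real.log (α*β))).add h2).sub h3
    refine h4.congr_deriv ?_
    rw [Real.rpow_sub hy0, Real.rpow_one]
    field_simp
    ring
  have hmono : StrictMonoOn g (Set.Ioc 0 1) := by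
    apply strictMonoOn_of_deriv_pos (convex_Ioc 0 1)
    · intro y hy
      exact (hkey y hy.1).continuousAt.continuousWithinAt
    · intro x hx
      rw [interior_Ioc] at hx
      rw [(hkey x hx.1).deriv]
      have hxb : x ^ β ≤ 1 := Real.rpow_le_one hx.1.le hx.2.le hβ.le
      have hpos : (0:ℝ) < x ^ β := Real.rpow_pos_of_pos hx.1 β
      have hle : α * β ≤ α * β / x ^ β := by
        rw [le_div_iff₀ hpos]; nlinarith
      exact div_pos (by linarith) hx.1
  have hfg : ∀ y : ℝ, 0 < y → f y = Real.exp (g y) := by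
    intro y hy0
    have hyy : y ^ (1+β) = Real.exp ((1+β) * Real.log y) := by
      rw [Real.rpow_def_of_pos hy0, mul_comm]
    simp only [hgdef]
    rw [Real.exp_sub, Real.exp_add, Real.exp_log hab, ← hyy]
    show α * β * Real.exp (-α * (1 / y ^ β - 1)) / y ^ (1+β) = _
    rw [one_div]
  have hfmono : StrictMonoOn f (Set.Ioc 0 1) := by
    intro x hx y hy hxy
    rw [hfg x hx.1, hfg y hy.1]
    exact Real.exp_lt_exp.mpr (hmono hx hy hxy)
  refine ⟨hfmono.mono Set.Ioo_subset_Ioc_self, ?_, ?_⟩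
  · rintro x ⟨z, hz, rfl⟩
    exact (hfmono ⟨hz.1, hz.2.le⟩ ⟨zero_lt_one, le_refl 1⟩ hz.2).le
  · intro b hb
    have hcont : ContinuousAt f 1 := by
      have c1 : ContinuousAt (fun t : ℝ => t ^ β) 1 :=
        Real.continuousAt_rpow_const 1 β (Or.inl one_ne_zero)
      have c2 : ContinuousAt (fun t : ℝ => t ^ (1+β)) 1 :=
        Real.continuousAt_rpow_const 1 (1+β) (Or.inl one_ne_zero)
      have hne1 : (1:ℝ) ^ β ≠ 0 := by rw [Real.one_rpow]; norm_num
      have hne2 : (1:ℝ) ^ (1+β) ≠ 0 := by rw [Real.one_rpow]; norm_num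
      show ContinuousAt (fun y => α * β * Real.exp (-α * (1 / y ^ β - 1)) / y ^ (1 + β)) 1
      exact (continuousAt_const.mul
        ((continuousAt_const.mul ((continuousAt_const.div c1 hne1).sub
          continuousAt_const)).rexp)).div c2 hne2
    have htend : Filter.Tendsto f (nhdsWithin 1 (Set.Iio 1)) (nhds (f 1)) :=
      hcont.continuousWithinAt.tendsto
    refine le_of_tendsto htend ?_
    filter_upwards [Ioo_mem_nhdsLT_of_mem (Set.mem_Ioc.mpr ⟨zero_lt_one, le_refl 1⟩)] with z hz
    exact hb ⟨z, hz, rfl⟩
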